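/- Let α ∈ [0,1] be a real number and let K_{a,b} be the complete bipartite graph with parts of sizes a ≥ 1 and b ≥ 1. Then the characteristic polynomial of A_α(K_{a,b}) equals (x − αb)^{a−1} · (x − αa)^{b−1} · (x² − α(a+b)x + ab(2α−1)); in particular, the A_α-spectrum of K_{a,b} consists of αb with multiplicity a−1, αa with multiplicity b−1, and the two eigenvalues ½(α(a+b) ± √(α²(a+b)² + 4ab(1−2α))). -/

import Mathlib

open Matrix Polynomial BigOperators

/-- The generalized adjacency matrix `A_α(G) = α·D(G) + (1−α)·A(G)`. -/
noncomputable def Aalpha {V : Type*} [Fintype V] (G : SimpleGraph V) (α : ℝ) :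
    Matrix V V ℝ :=
  letI := Classical.decEq V
  letI := Classical.decRel G.Adj
  α • Matrix.diagonal (fun v => (G.degree v : ℝ)) + (1 - α) • G.adjMatrix ℝ

/-- `μ` is an eigenvalue of the real matrix `M`. -/
def Matrix.IsEigenvalue {n : Type*} [Fintype n] (M : Matrix n n ℝ) (μ : ℝ) : Prop :=
  ∃ v : n → ℝ, v ≠ 0 ∧ M.mulVec v = μ • v

/-- The dimension of the eigenspace of a real matrix `M` for the value `μ`. -/
noncomputable def eigMult {n : Type*} [Fintype n] (M : Matrix n n ℝ) (μ : ℝ) : ℕ :=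
  letI := Classical.decEq n
  Module.finrank ℝ (Module.End.eigenspace (Matrix.toLin' M) μ)

/-- The joined union `G[G_1, …, G_n]`. -/
def joinedUnion {n : ℕ} (G : SimpleGraph (Fin n)) (V : Fin n → Type*)
    (Gs : ∀ i, SimpleGraph (V i)) : SimpleGraph (Σ i, V i) :=
  SimpleGraph.fromRel (fun x y =>
    if h : x.1 = y.1 then (Gs y.1).Adj (h ▸ x.2) y.2 else G.Adj x.1 y.1)

/-- The join `G ∇ H` of two graphs. -/
def graphJoin {V W : Type*} (G : SimpleGraph V) (H : SimpleGraph W) :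
    SimpleGraph (V ⊕ W) :=
  SimpleGraph.fromRel (fun x y =>
    match x, y with
    | Sum.inl a, Sum.inl b => G.Adj a b
    | Sum.inr a, Sum.inr b => H.Adj a b
    | _, _ => True)

/-- The disjoint union `G ∪ H` of two graphs. -/
def disjUnion {V W : Type*} (G : SimpleGraph V) (H : SimpleGraph W) :
    SimpleGraph (V ⊕ W) :=
  SimpleGraph.fromRel (fun x y =>
    match x, y with
    | Sum.inl a, Sum.inl b => G.Adj a b
    | Sum.inr a, Sum.inr b => H.Adj a b
    | _, _ => False)

/-- Degree of a vertex (classical version). -/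
noncomputable def gdegree {V : Type*} [Fintype V] (G : SimpleGraph V) (v : V) : ℕ :=
  letI := Classical.decEq V
  letI := Classical.decRel G.Adj
  G.degree v

/-- The power graph of a group. -/
def powerGraph (G : Type*) [Group G] : SimpleGraph G :=
  SimpleGraph.fromRel (fun x y => ∃ k : ℕ, 0 < k ∧ y = x ^ k)


noncomputable section

variable (α : ℝ) (a b : ℕ)

/-- explicit entries of A_α(K_{a,b}) -/
def N0 : Matrix (Fin a ⊕ Fin b) (Fin a ⊕ Fin b) ℝ :=
  Matrix.of fun i j =>
    match i, j with
    | Sum.inl i, Sum.inl j => if i = j then α * b else 0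
    | Sum.inl _, Sum.inr _ => 1 - α
    | Sum.inr _, Sum.inl _ => 1 - α
    | Sum.inr i, Sum.inr j => if i = j then α * a else 0

theorem deg_left (i : Fin a) [inst : Fintype ((completeBipartiteGraph (Fin a) (Fin b)).neighborSet (Sum.inl i))] :
    (completeBipartiteGraph (Fin a) (Fin b)).degree (Sum.inl i) = b := by
  classical
  rw [← SimpleGraph.card_neighborSet_eq_degree]
  have h : (completeBipartiteGraph (Fin a) (Fin b)).neighborSet (Sum.inl i) = {w | w.isRight} := by
    ext w; cases w <;> simp [SimpleGraph.neighborSet]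
  rw [Fintype.card_congr' (congrArg _ h)]
  simp [Fintype.card_subtype]
  rw [Finset.card_filter, Fintype.sum_sum_type]
  simp

theorem deg_right (i : Fin b) [inst : Fintype ((completeBipartiteGraph (Fin a) (Fin b)).neighborSet (Sum.inr i))] :
    (completeBipartiteGraph (Fin a) (Fin b)).degree (Sum.inr i) = a := by
  classical
  rw [← SimpleGraph.card_neighborSet_eq_degree]
  have h : (completeBipartiteGraph (Fin a) (Fin b)).neighborSet (Sum.inr i) = {w | w.isLeft} := by
    ext w; cases w <;> simp [SimpleGraph.neighborSet]
  rw [Fintype.card_congr' (congrArg _ h)]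
  simp [Fintype.card_subtype]
  rw [Finset.card_filter, Fintype.sum_sum_type]
  simp

theorem Aalpha_eq : Aalpha (completeBipartiteGraph (Fin a) (Fin b)) α = N0 α a b := by
  ext i j
  cases i with
  | inl i => cases j with
    | inl j =>
      simp [Aalpha, N0, Matrix.diagonal_apply, deg_left]

    | inr j => simp [Aalpha, N0, Matrix.diagonal_apply]
  | inr i => cases j with
    | inl j => simp [Aalpha, N0, Matrix.diagonal_apply]
    | inr j =>
      simp [Aalpha, N0, Matrix.diagonal_apply, deg_right]


end

noncomputable section
open Matrix Polynomial
variable (α : ℝ) (a b : ℕ)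

theorem N0_charpoly (ha : 1 ≤ a) (hb : 1 ≤ b) :
    (N0 α a b).charpoly =
      (X - C (α * (b : ℝ))) ^ (a - 1) * (X - C (α * (a : ℝ))) ^ (b - 1) *
        (X ^ 2 - C (α * ((a : ℝ) + (b : ℝ))) * X + C ((a : ℝ) * (b : ℝ) * (2 * α - 1))) := by
  classical
  set K := RatFunc ℝ with hK
  set φ : ℝ[X] →+* K := algebraMap ℝ[X] K with hφdef
  have hφ : Function.Injective φ := IsFractionRing.injective _ _
  apply hφ
  set c : ℝ →+* K := φ.comp Polynomial.C with hcdef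
  set x : K := φ X with hx
  set u : K := x - c (α * b) with hudef
  set v : K := x - c (α * a) with hvdef
  have hu : u ≠ 0 := by
    intro h
    exact Polynomial.X_sub_C_ne_zero (α * b) (hφ (by rw [map_sub, map_zero]; exact h))
  have hv : v ≠ 0 := by
    intro h
    exact Polynomial.X_sub_C_ne_zero (α * a) (hφ (by rw [map_sub, map_zero]; exact h))
  set d : Fin a ⊕ Fin b → K := Sum.elim (fun _ => u) (fun _ => v) with hddef
  have hd : ∀ i, d i ≠ 0 := by rintro (i | i) <;> simpa [hddef] using ‹_›
  set e : Fin a ⊕ Fin b → K := Sum.elim (fun _ => (1 : K)) (fun _ => 0) with hedef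
  set f : Fin a ⊕ Fin b → K := Sum.elim (fun _ => (0 : K)) (fun _ => 1) with hfdef
  set U : Matrix (Fin a ⊕ Fin b) (Fin 2) K :=
    Matrix.of (fun i j => if j = 0 then c (1 - α) * e i else f i) with hUdef
  set Vt : Matrix (Fin 2) (Fin a ⊕ Fin b) K :=
    Matrix.of (fun j i => if j = 0 then f i else c (1 - α) * e i) with hVdef
  have hc : ∀ r : ℝ, φ (C r) = c r := fun _ => rfl
  have huφ : φ (X - C (α * b)) = u := by
    rw [map_sub, hudef, hcdef, hx]; rfl
  have hvφ : φ (X - C (α * a)) = v := by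
    rw [map_sub, hvdef, hcdef, hx]; rfl
  have step1 : (charmatrix (N0 α a b)).map φ = Matrix.diagonal d - U * Vt := by
    ext i k
    rw [Matrix.map_apply, Matrix.sub_apply, Matrix.mul_apply, Fin.sum_univ_two]
    cases i with
    | inl i => cases k with
      | inl k =>
        rcases eq_or_ne i k with rfl | h
        · rw [charmatrix_apply_eq]
          have hn : N0 α a b (Sum.inl i) (Sum.inl i) = α * b := by simp [N0]
          rw [hn, huφ]
          simp [hUdef, hVdef, hedef, hfdef, hddef, Matrix.diagonal_apply]
        · rw [charmatrix_apply_ne _ _ _ (by simp [h])]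
          simp [N0, h, hUdef, hVdef, hedef, hfdef, Matrix.diagonal_apply]
      | inr k =>
        rw [charmatrix_apply_ne _ _ _ (by simp)]
        simp [N0, hUdef, hVdef, hedef, hfdef, Matrix.diagonal_apply, map_sub, hc]
    | inr i => cases k with
      | inl k =>
        rw [charmatrix_apply_ne _ _ _ (by simp)]
        simp [N0, hUdef, hVdef, hedef, hfdef, Matrix.diagonal_apply, map_sub, hc]
      | inr k =>
        rcases eq_or_ne i k with rfl | h
        · rw [charmatrix_apply_eq]
          have hn : N0 α a b (Sum.inr i) (Sum.inr i) = α * a := by simp [N0]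
          rw [hn, hvφ]
          simp [hUdef, hVdef, hedef, hfdef, hddef, Matrix.diagonal_apply]
        · rw [charmatrix_apply_ne _ _ _ (by simp [h])]
          simp [N0, h, hUdef, hVdef, hedef, hfdef, Matrix.diagonal_apply]
  set E : Matrix (Fin a ⊕ Fin b) (Fin a ⊕ Fin b) K := Matrix.diagonal (fun i => (d i)⁻¹) with hEdef
  have hde : Matrix.diagonal d * E = 1 := by
    rw [hEdef, Matrix.diagonal_mul_diagonal]
    have : (fun i => d i * (d i)⁻¹) = fun _ => (1 : K) := funext fun i => mul_inv_cancel₀ (hd i)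
    rw [this, Matrix.diagonal_one]
  have factor : Matrix.diagonal d - U * Vt = Matrix.diagonal d * (1 - (E * U) * Vt) := by
    rw [Matrix.mul_sub, Matrix.mul_one, ← Matrix.mul_assoc, ← Matrix.mul_assoc, hde,
      Matrix.one_mul]
  set S : Matrix (Fin 2) (Fin 2) K := Vt * (E * U) with hSdef
  have hEU : ∀ i j, (E * U) i j = (d i)⁻¹ * U i j := fun i j => by
    rw [hEdef, Matrix.diagonal_mul]
  have hS00 : S 0 0 = 0 := by
    rw [hSdef, Matrix.mul_apply, Fintype.sum_sum_type]
    simp only [hEU]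
    simp [hEU, hUdef, hVdef, hedef, hfdef, Matrix.diagonal_mul]
  have hS11 : S 1 1 = 0 := by
    rw [hSdef, Matrix.mul_apply, Fintype.sum_sum_type]
    simp only [hEU]
    simp [hEU, hUdef, hVdef, hedef, hfdef, Matrix.diagonal_mul]
  have hS01 : S 0 1 = (b : K) * v⁻¹ := by
    rw [hSdef, Matrix.mul_apply, Fintype.sum_sum_type]
    simp only [hEU]
    simp [hEU, hUdef, hVdef, hedef, hfdef, hddef, Matrix.diagonal_mul, Finset.sum_const,
      nsmul_eq_mul]
    all_goals first | ring1 | exact Or.inl trivial | (left; ring1) | simp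
  have hS10 : S 1 0 = (a : K) * (c (1 - α) * c (1 - α) * u⁻¹) := by
    rw [hSdef, Matrix.mul_apply, Fintype.sum_sum_type]
    simp only [hEU]
    simp [hEU, hUdef, hVdef, hedef, hfdef, hddef, Matrix.diagonal_mul, Finset.sum_const,
      nsmul_eq_mul]
    all_goals first | ring1 | exact Or.inl trivial | (left; ring1) | simp
  have hdet2 : (1 - S).det = 1 - (b : K) * v⁻¹ * ((a : K) * (c (1 - α) * c (1 - α) * u⁻¹)) := by
    rw [Matrix.det_fin_two]
    simp [Matrix.sub_apply, Matrix.one_apply, hS00, hS11, hS01, hS10]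
    ring
  have lhs_eq : φ ((N0 α a b).charpoly) =
      u ^ a * v ^ b * (1 - (b : K) * v⁻¹ * ((a : K) * (c (1 - α) * c (1 - α) * u⁻¹))) := by
    rw [Matrix.charpoly, RingHom.map_det, RingHom.mapMatrix_apply, step1, factor, Matrix.det_mul,
      Matrix.det_one_sub_mul_comm, ← hSdef, hdet2, Matrix.det_diagonal,
      Fintype.prod_sum_type]
    simp [hddef, Finset.prod_const]
  rw [lhs_eq]
  obtain ⟨a', rfl⟩ : ∃ a', a = a' + 1 := ⟨a - 1, (Nat.succ_pred_eq_of_pos ha).symm⟩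
  obtain ⟨b', rfl⟩ : ∃ b', b = b' + 1 := ⟨b - 1, (Nat.succ_pred_eq_of_pos hb).symm⟩
  simp only [Nat.add_sub_cancel]
  have key : u ^ (a' + 1) * v ^ (b' + 1) *
      (1 - ((b' + 1 : ℕ) : K) * v⁻¹ * (((a' + 1 : ℕ) : K) * (c (1 - α) * c (1 - α) * u⁻¹))) =
      u ^ a' * v ^ b' *
        (u * v - c (1 - α) * c (1 - α) * ((a' + 1 : ℕ) : K) * ((b' + 1 : ℕ) : K)) := by
    rw [pow_succ, pow_succ]
    linear_combination (-(u ^ a' * v ^ b' * ((b' + 1 : ℕ) : K) * ((a' + 1 : ℕ) : K) *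
      (c (1 - α) * c (1 - α)))) * mul_inv_cancel₀ hu +
      (-(u ^ a' * v ^ b' * ((b' + 1 : ℕ) : K) * ((a' + 1 : ℕ) : K) *
      (c (1 - α) * c (1 - α))) * (u * u⁻¹)) * mul_inv_cancel₀ hv
  rw [key]
  simp only [_root_.map_mul, map_sub, map_add, map_pow, hc, ← hx]
  rw [hudef, hvdef]
  simp only [_root_.map_mul, map_sub, map_add, _root_.map_one, map_natCast, map_ofNat]
  push_cast
  ring

end


/-- the `A_α`-characteristic polynomial of the complete bipartite
graph `K_{a,b}`. -/
theorem stmt_9 {α : ℝ} (hα : α ∈ Set.Icc (0 : ℝ) 1)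
    (a b : ℕ) (ha : 1 ≤ a) (hb : 1 ≤ b) :
    (Aalpha (completeBipartiteGraph (Fin a) (Fin b)) α).charpoly =
      (X - C (α * (b : ℝ))) ^ (a - 1) * (X - C (α * (a : ℝ))) ^ (b - 1) *
        (X ^ 2 - C (α * ((a : ℝ) + (b : ℝ))) * X + C ((a : ℝ) * (b : ℝ) * (2 * α - 1))) := by
  rw [Aalpha_eq]
  exact N0_charpoly α a b ha hb
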